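/- Let y : ℝ³ × ℝ → ℝ³, (x,t) ↦ y(x,t), be twice continuously differentiable, let ∇y denote the spatial Jacobian matrix and cof M := (adjugate M)ᵀ the cofactor matrix. Then at every point, ∂/∂t [det(∇y)] = Σ_{α=1}^{3} ∂/∂x_α [ Σ_{i=1}^{3} (cof ∇y)_{i α} · ∂yᵢ/∂t ], i.e. ∂ₜ det ∇y = div( (cof ∇y)ᵀ ∂ₜ y ). -/

import Mathlib

open Matrix
open scoped BigOperators

set_option maxHeartbeats 2000000 in
theorem det_conservation_law
    (y : (Fin 3 → ℝ) → ℝ → (Fin 3 → ℝ))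
    (hy : ContDiff ℝ 2 (fun p : (Fin 3 → ℝ) × ℝ => y p.1 p.2))
    (J : (Fin 3 → ℝ) → ℝ → Matrix (Fin 3) (Fin 3) ℝ)
    (hJ : ∀ z t i α, J z t i α = fderiv ℝ (fun w => y w t) z (Pi.single α 1) i)
    (v : (Fin 3 → ℝ) → ℝ → (Fin 3 → ℝ))
    (hv : ∀ z t i, v z t i = deriv (fun s => y z s i) t)
    (x : Fin 3 → ℝ) (t : ℝ) :
    deriv (fun s => (J x s).det) t
      = ∑ α, fderiv ℝ (fun z => ∑ i, ((J z t).adjugate)ᵀ i α * v z t i) x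
          (Pi.single α 1) := by
  have hdF : Differentiable ℝ (fun p : (Fin 3 → ℝ) × ℝ => y p.1 p.2) :=
    hy.differentiable (by norm_num)
  have hD1 : ContDiff ℝ 1 (fderiv ℝ (fun p : (Fin 3 → ℝ) × ℝ => y p.1 p.2)) :=
    hy.fderiv_right (by norm_num)
  set F : (Fin 3 → ℝ) × ℝ → (Fin 3 → ℝ) := fun p => y p.1 p.2 with hFdef
  set D2 : ((Fin 3 → ℝ) × ℝ) →L[ℝ] ((Fin 3 → ℝ) × ℝ) →L[ℝ] (Fin 3 → ℝ) :=
    fderiv ℝ (fderiv ℝ F) (x, t) with hD2def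
  have hIncl : ∀ (z : Fin 3 → ℝ) (s : ℝ), HasFDerivAt (fun w : Fin 3 → ℝ => (w, s))
      ((ContinuousLinearMap.id ℝ (Fin 3 → ℝ)).prod (0 : (Fin 3 → ℝ) →L[ℝ] ℝ)) z :=
    fun z s => HasFDerivAt.prodMk (hasFDerivAt_id z) (hasFDerivAt_const s z)
  have hJD : ∀ (z : Fin 3 → ℝ) (s : ℝ) (i α : Fin 3),
      J z s i α = fderiv ℝ F (z, s) (Pi.single α 1, (0 : ℝ)) i := by
    intro z s i α
    rw [hJ]
    have h : HasFDerivAt (fun w => y w s)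
        ((fderiv ℝ F (z, s)).comp
          ((ContinuousLinearMap.id ℝ (Fin 3 → ℝ)).prod (0 : (Fin 3 → ℝ) →L[ℝ] ℝ))) z :=
      by have h' := (hdF (z, s)).hasFDerivAt.comp z (hIncl z s); exact h'
    rw [h.fderiv]
    simp
  have hvD : ∀ (z : Fin 3 → ℝ) (s : ℝ) (i : Fin 3),
      v z s i = fderiv ℝ F (z, s) ((0 : Fin 3 → ℝ), (1 : ℝ)) i := by
    intro z s i
    rw [hv]
    have hg : HasDerivAt (fun u : ℝ => ((z, u) : (Fin 3 → ℝ) × ℝ)) ((0 : Fin 3 → ℝ), (1 : ℝ)) s :=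
      HasDerivAt.prodMk (hasDerivAt_const s z) (hasDerivAt_id s)
    have h1 : HasDerivAt (fun u => F (z, u)) (fderiv ℝ F (z, s) ((0 : Fin 3 → ℝ), (1 : ℝ))) s :=
      (hdF (z, s)).hasFDerivAt.comp_hasDerivAt s hg
    have h2 : HasDerivAt (fun u => y z u i) (fderiv ℝ F (z, s) ((0 : Fin 3 → ℝ), (1 : ℝ)) i) s :=
      (ContinuousLinearMap.proj i : (Fin 3 → ℝ) →L[ℝ] ℝ).hasFDerivAt.comp_hasDerivAt s h1
    rw [h2.deriv]
  have hD2at : HasFDerivAt (fderiv ℝ F) D2 (x, t) :=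
    ((hD1.differentiable (by norm_num)) (x, t)).hasFDerivAt
  have hsymm : ∀ u w : (Fin 3 → ℝ) × ℝ, D2 u w = D2 w u :=
    second_derivative_symmetric (fun p => (hdF p).hasFDerivAt) hD2at
  have hDz : HasFDerivAt (fun z : Fin 3 → ℝ => fderiv ℝ F (z, t))
      (D2.comp ((ContinuousLinearMap.id ℝ (Fin 3 → ℝ)).prod (0 : (Fin 3 → ℝ) →L[ℝ] ℝ))) x :=
    hD2at.comp x (hIncl x t)
  have hgt : HasDerivAt (fun s : ℝ => ((x, s) : (Fin 3 → ℝ) × ℝ)) ((0 : Fin 3 → ℝ), (1 : ℝ)) t :=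
    HasDerivAt.prodMk (hasDerivAt_const t x) (hasDerivAt_id t)
  have hDt : HasDerivAt (fun s : ℝ => fderiv ℝ F (x, s)) (D2 ((0 : Fin 3 → ℝ), (1 : ℝ))) t :=
    hD2at.comp_hasDerivAt t hgt
  -- spatial derivatives of matrix entries
  have hxJ : ∀ (i α : Fin 3), HasFDerivAt (fun z => J z t i α)
      (((ContinuousLinearMap.proj i : (Fin 3 → ℝ) →L[ℝ] ℝ).comp
          (ContinuousLinearMap.apply ℝ (Fin 3 → ℝ) ((Pi.single α 1, (0 : ℝ)) : (Fin 3 → ℝ) × ℝ))).comp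
        (D2.comp ((ContinuousLinearMap.id ℝ (Fin 3 → ℝ)).prod (0 : (Fin 3 → ℝ) →L[ℝ] ℝ)))) x := by
    intro i α
    have h := (((ContinuousLinearMap.proj i : (Fin 3 → ℝ) →L[ℝ] ℝ).comp
        (ContinuousLinearMap.apply ℝ (Fin 3 → ℝ) ((Pi.single α 1, (0 : ℝ)) : (Fin 3 → ℝ) × ℝ))).hasFDerivAt).comp x hDz
    have hfun : (fun z => J z t i α) = fun z : Fin 3 → ℝ =>
        ((ContinuousLinearMap.proj i : (Fin 3 → ℝ) →L[ℝ] ℝ).comp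
          (ContinuousLinearMap.apply ℝ (Fin 3 → ℝ) ((Pi.single α 1, (0 : ℝ)) : (Fin 3 → ℝ) × ℝ)))
          (fderiv ℝ F (z, t)) := funext fun z => by rw [hJD z t i α]; rfl
    rw [hfun]
    exact h
  -- spatial derivatives of v entries
  have hxv : ∀ i : Fin 3, HasFDerivAt (fun z => v z t i)
      (((ContinuousLinearMap.proj i : (Fin 3 → ℝ) →L[ℝ] ℝ).comp
          (ContinuousLinearMap.apply ℝ (Fin 3 → ℝ) (((0 : Fin 3 → ℝ), (1 : ℝ)) : (Fin 3 → ℝ) × ℝ))).comp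
        (D2.comp ((ContinuousLinearMap.id ℝ (Fin 3 → ℝ)).prod (0 : (Fin 3 → ℝ) →L[ℝ] ℝ)))) x := by
    intro i
    have h := (((ContinuousLinearMap.proj i : (Fin 3 → ℝ) →L[ℝ] ℝ).comp
        (ContinuousLinearMap.apply ℝ (Fin 3 → ℝ) (((0 : Fin 3 → ℝ), (1 : ℝ)) : (Fin 3 → ℝ) × ℝ))).hasFDerivAt).comp x hDz
    have hfun : (fun z => v z t i) = fun z : Fin 3 → ℝ =>
        ((ContinuousLinearMap.proj i : (Fin 3 → ℝ) →L[ℝ] ℝ).comp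
          (ContinuousLinearMap.apply ℝ (Fin 3 → ℝ) (((0 : Fin 3 → ℝ), (1 : ℝ)) : (Fin 3 → ℝ) × ℝ)))
          (fderiv ℝ F (z, t)) := funext fun z => by rw [hvD z t i]; rfl
    rw [hfun]
    exact h
  -- time derivatives of matrix entries
  have htJ : ∀ (i α : Fin 3), HasDerivAt (fun s => J x s i α)
      (D2 ((0 : Fin 3 → ℝ), (1 : ℝ)) (Pi.single α 1, (0 : ℝ)) i) t := by
    intro i α
    have h := ((ContinuousLinearMap.proj i : (Fin 3 → ℝ) →L[ℝ] ℝ).comp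
        (ContinuousLinearMap.apply ℝ (Fin 3 → ℝ) ((Pi.single α 1, (0 : ℝ)) : (Fin 3 → ℝ) × ℝ))).hasFDerivAt.comp_hasDerivAt t hDt
    have hfun : (fun s => J x s i α) = fun s : ℝ =>
        ((ContinuousLinearMap.proj i : (Fin 3 → ℝ) →L[ℝ] ℝ).comp
          (ContinuousLinearMap.apply ℝ (Fin 3 → ℝ) ((Pi.single α 1, (0 : ℝ)) : (Fin 3 → ℝ) × ℝ)))
          (fderiv ℝ F (x, s)) := funext fun s => by rw [hJD x s i α]; rfl
    rw [hfun]
    exact h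
  simp only [Matrix.det_fin_three, Fin.sum_univ_three, Matrix.adjugate_fin_three,
    Matrix.transpose_apply, Matrix.cons_val', Matrix.cons_val_zero, Matrix.cons_val_one,
    Matrix.cons_val_two, Matrix.head_cons, Matrix.tail_cons, Matrix.head_fin_const,
    Matrix.empty_val', Matrix.cons_val_fin_one, Matrix.of_apply]
  have hdet : HasDerivAt
      (fun s =>
        J x s 0 0 * J x s 1 1 * J x s 2 2 - J x s 0 0 * J x s 1 2 * J x s 2 1 -
              J x s 0 1 * J x s 1 0 * J x s 2 2 +
              J x s 0 1 * J x s 1 2 * J x s 2 0 +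
            J x s 0 2 * J x s 1 0 * J x s 2 1 -
          J x s 0 2 * J x s 1 1 * J x s 2 0) _ t :=
    ((((((htJ 0 0).mul (htJ 1 1)).mul (htJ 2 2)).sub
        (((htJ 0 0).mul (htJ 1 2)).mul (htJ 2 1))).sub
        (((htJ 0 1).mul (htJ 1 0)).mul (htJ 2 2))).add
        (((htJ 0 1).mul (htJ 1 2)).mul (htJ 2 0))).add
        (((htJ 0 2).mul (htJ 1 0)).mul (htJ 2 1)) |>.sub
        (((htJ 0 2).mul (htJ 1 1)).mul (htJ 2 0))
  have H0 : HasFDerivAt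
      (fun z =>
        (J z t 1 1 * J z t 2 2 - J z t 1 2 * J z t 2 1) * v z t 0 +
            (-(J z t 0 1 * J z t 2 2) + J z t 0 2 * J z t 2 1) * v z t 1 +
          (J z t 0 1 * J z t 1 2 - J z t 0 2 * J z t 1 1) * v z t 2) _ x :=
    (((((hxJ 1 1).mul (hxJ 2 2)).sub ((hxJ 1 2).mul (hxJ 2 1))).mul (hxv 0)).add
      (((((hxJ 0 1).mul (hxJ 2 2)).neg).add ((hxJ 0 2).mul (hxJ 2 1))).mul (hxv 1))).add
      ((((hxJ 0 1).mul (hxJ 1 2)).sub ((hxJ 0 2).mul (hxJ 1 1))).mul (hxv 2))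
  have H1 : HasFDerivAt
      (fun z =>
        (-(J z t 1 0 * J z t 2 2) + J z t 1 2 * J z t 2 0) * v z t 0 +
            (J z t 0 0 * J z t 2 2 - J z t 0 2 * J z t 2 0) * v z t 1 +
          (-(J z t 0 0 * J z t 1 2) + J z t 0 2 * J z t 1 0) * v z t 2) _ x :=
    ((((((hxJ 1 0).mul (hxJ 2 2)).neg).add ((hxJ 1 2).mul (hxJ 2 0))).mul (hxv 0)).add
      ((((hxJ 0 0).mul (hxJ 2 2)).sub ((hxJ 0 2).mul (hxJ 2 0))).mul (hxv 1))).add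
      (((((hxJ 0 0).mul (hxJ 1 2)).neg).add ((hxJ 0 2).mul (hxJ 1 0))).mul (hxv 2))
  have H2 : HasFDerivAt
      (fun z =>
        (J z t 1 0 * J z t 2 1 - J z t 1 1 * J z t 2 0) * v z t 0 +
            (-(J z t 0 0 * J z t 2 1) + J z t 0 1 * J z t 2 0) * v z t 1 +
          (J z t 0 0 * J z t 1 1 - J z t 0 1 * J z t 1 0) * v z t 2) _ x :=
    (((((hxJ 1 0).mul (hxJ 2 1)).sub ((hxJ 1 1).mul (hxJ 2 0))).mul (hxv 0)).add
      (((((hxJ 0 0).mul (hxJ 2 1)).neg).add ((hxJ 0 1).mul (hxJ 2 0))).mul (hxv 1))).add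
      ((((hxJ 0 0).mul (hxJ 1 1)).sub ((hxJ 0 1).mul (hxJ 1 0))).mul (hxv 2))
  rw [hdet.deriv, H0.fderiv, H1.fderiv, H2.fderiv]
  simp only [ContinuousLinearMap.add_apply, ContinuousLinearMap.smul_apply,
    ContinuousLinearMap.sub_apply, ContinuousLinearMap.neg_apply, ContinuousLinearMap.coe_comp',
    Function.comp_apply, ContinuousLinearMap.apply_apply, ContinuousLinearMap.proj_apply,
    ContinuousLinearMap.prod_apply, ContinuousLinearMap.coe_id', id_eq,
    ContinuousLinearMap.zero_apply, smul_eq_mul]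
  have s10 : ∀ i : Fin 3, D2 (Pi.single (1 : Fin 3) (1 : ℝ), (0 : ℝ))
      (Pi.single (0 : Fin 3) (1 : ℝ), (0 : ℝ)) i
      = D2 (Pi.single (0 : Fin 3) (1 : ℝ), (0 : ℝ)) (Pi.single (1 : Fin 3) (1 : ℝ), (0 : ℝ)) i :=
    fun i => by rw [hsymm]
  have s20 : ∀ i : Fin 3, D2 (Pi.single (2 : Fin 3) (1 : ℝ), (0 : ℝ))
      (Pi.single (0 : Fin 3) (1 : ℝ), (0 : ℝ)) i
      = D2 (Pi.single (0 : Fin 3) (1 : ℝ), (0 : ℝ)) (Pi.single (2 : Fin 3) (1 : ℝ), (0 : ℝ)) i :=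
    fun i => by rw [hsymm]
  have s21 : ∀ i : Fin 3, D2 (Pi.single (2 : Fin 3) (1 : ℝ), (0 : ℝ))
      (Pi.single (1 : Fin 3) (1 : ℝ), (0 : ℝ)) i
      = D2 (Pi.single (1 : Fin 3) (1 : ℝ), (0 : ℝ)) (Pi.single (2 : Fin 3) (1 : ℝ), (0 : ℝ)) i :=
    fun i => by rw [hsymm]
  have sT : ∀ (α i : Fin 3), D2 ((0 : Fin 3 → ℝ), (1 : ℝ)) (Pi.single α 1, (0 : ℝ)) i
      = D2 (Pi.single α 1, (0 : ℝ)) ((0 : Fin 3 → ℝ), (1 : ℝ)) i :=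
    fun α i => by rw [hsymm]
  simp only [s10, s20, s21, sT]
  simp only [Pi.mul_apply, Pi.sub_apply, Pi.neg_apply, Pi.add_apply]
  ring
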